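/- Let m, d ≥ 1, let W : Fin m → ℝ^d, let a : Fin m → ℝ with a_i ∈ {1, −1} for all i, let x_t ∈ ℝ^d, η ∈ ℝ, G ∈ ℝ, and define the updated weights W'_j := W_j + (η · a_j / √m) · G · 1{⟨W_j, x_t⟩ ≥ 0} • x_t. Set A := {j : a_j = 1}, B := {j : a_j = −1}, L(x, y) := (1/m)·⟨x,y⟩·Σ_{j ∈ A} 1{⟨W_j, y⟩ ≥ 0}·(1{⟨W'_j, x⟩ ≥ 0} − 1{⟨W_j, x⟩ ≥ 0}), and M(x, y) := (1/m)·⟨x,y⟩·Σ_{j ∈ B} 1{⟨W_j, y⟩ ≥ 0}·(1{⟨W'_j, x⟩ ≥ 0} − 1{⟨W_j, x⟩ ≥ 0}). Then for every x ∈ ℝ^d, η · ( H_W(x, x_t) + M(x, x_t) ) · G ≤ f(x; a, W') − f(x; a, W) ≤ η · ( H_W(x, x_t) + L(x, x_t) ) · G. -/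

import Mathlib

open RealInnerProductSpace

private lemma relu_eq (u : ℝ) : max u 0 = u * (if 0 ≤ u then (1:ℝ) else 0) := by
  split_ifs with h
  · simp [max_eq_left h]
  · simp [max_eq_right (le_of_not_ge h)]

private lemma cross_nonpos (u v : ℝ) :
    u * ((if 0 ≤ v then (1:ℝ) else 0) - (if 0 ≤ u then (1:ℝ) else 0)) ≤ 0 := by
  split_ifs with h1 h2 <;> nlinarith

private lemma same_nonneg (u v : ℝ) :
    0 ≤ v * ((if 0 ≤ v then (1:ℝ) else 0) - (if 0 ≤ u then (1:ℝ) else 0)) := by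
  split_ifs with h1 h2 <;> nlinarith

noncomputable def twoLayer (m d : ℕ) (a : Fin m → ℝ)
    (W : Fin m → EuclideanSpace ℝ (Fin d)) (x : EuclideanSpace ℝ (Fin d)) : ℝ :=
  (1 / Real.sqrt m) * ∑ i, a i * max ⟪W i, x⟫ 0

noncomputable def empKernel (m d : ℕ) (W : Fin m → EuclideanSpace ℝ (Fin d))
    (x y : EuclideanSpace ℝ (Fin d)) : ℝ :=
  ⟪x, y⟫ * ((1 : ℝ) / m) *
    ∑ i, (if 0 ≤ ⟪W i, x⟫ then (1 : ℝ) else 0) * (if 0 ≤ ⟪W i, y⟫ then (1 : ℝ) else 0)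

open Classical in
/-- One SGD step changes the network predictions by an amount sandwiched between
`η (H_W(x, x_t) + M(x, x_t)) G` and `η (H_W(x, x_t) + L(x, x_t)) G`. -/
theorem sgd_step_prediction_sandwich (m d : ℕ) (hm : 1 ≤ m) (hd : 1 ≤ d)
    (W : Fin m → EuclideanSpace ℝ (Fin d)) (a : Fin m → ℝ)
    (ha : ∀ i, a i = 1 ∨ a i = -1)
    (xt : EuclideanSpace ℝ (Fin d)) (η : ℝ) (hη : 0 ≤ η) (G : ℝ)
    (W' : Fin m → EuclideanSpace ℝ (Fin d))
    (hW' : ∀ j, W' j =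
      W j + ((η * a j / Real.sqrt m) * G * (if 0 ≤ ⟪W j, xt⟫ then (1 : ℝ) else 0)) • xt)
    (A B : Finset (Fin m))
    (hA : A = Finset.univ.filter fun j => a j = 1)
    (hB : B = Finset.univ.filter fun j => a j = -1)
    (L M : EuclideanSpace ℝ (Fin d) → EuclideanSpace ℝ (Fin d) → ℝ)
    (hL : ∀ x y, L x y = ((1 : ℝ) / m) * ⟪x, y⟫ *
      ∑ j ∈ A, (if 0 ≤ ⟪W j, y⟫ then (1 : ℝ) else 0) *
        ((if 0 ≤ ⟪W' j, x⟫ then (1 : ℝ) else 0) - (if 0 ≤ ⟪W j, x⟫ then (1 : ℝ) else 0)))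
    (hM : ∀ x y, M x y = ((1 : ℝ) / m) * ⟪x, y⟫ *
      ∑ j ∈ B, (if 0 ≤ ⟪W j, y⟫ then (1 : ℝ) else 0) *
        ((if 0 ≤ ⟪W' j, x⟫ then (1 : ℝ) else 0) - (if 0 ≤ ⟪W j, x⟫ then (1 : ℝ) else 0))) :
    ∀ x : EuclideanSpace ℝ (Fin d),
      η * (empKernel m d W x xt + M x xt) * G ≤
          twoLayer m d a W' x - twoLayer m d a W x ∧
        twoLayer m d a W' x - twoLayer m d a W x ≤
          η * (empKernel m d W x xt + L x xt) * G := by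
  intro x
  have hm0 : (0:ℝ) < m := by exact_mod_cast Nat.lt_of_lt_of_le Nat.zero_lt_one hm
  have hsm : (0:ℝ) < Real.sqrt m := Real.sqrt_pos.mpr hm0
  have hsm' : Real.sqrt m ≠ 0 := ne_of_gt hsm
  have hmm : Real.sqrt m * Real.sqrt m = (m:ℝ) := Real.mul_self_sqrt (le_of_lt hm0)
  have hu' : ∀ i, ⟪W' i, x⟫ = ⟪W i, x⟫ +
      (η * a i / Real.sqrt m * G * (if 0 ≤ ⟪W i, xt⟫ then (1:ℝ) else 0)) * ⟪x, xt⟫ := by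
    intro i
    rw [hW' i, inner_add_left, real_inner_smul_left, real_inner_comm xt x]
  -- main decomposition
  have key : twoLayer m d a W' x - twoLayer m d a W x
      = η * empKernel m d W x xt * G + (1 / Real.sqrt m) * ∑ i, a i * ⟪W' i, x⟫ *
        ((if 0 ≤ ⟪W' i, x⟫ then (1:ℝ) else 0) - (if 0 ≤ ⟪W i, x⟫ then (1:ℝ) else 0)) := by
    unfold twoLayer
    rw [Finset.mul_sum, Finset.mul_sum, ← Finset.sum_sub_distrib]
    have step : ∀ i : Fin m,
        (1 / Real.sqrt m) * (a i * max ⟪W' i, x⟫ 0) -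
          (1 / Real.sqrt m) * (a i * max ⟪W i, x⟫ 0)
        = (η * (⟪x, xt⟫ * ((1:ℝ)/m)) * G) *
            ((if 0 ≤ ⟪W i, x⟫ then (1:ℝ) else 0) * (if 0 ≤ ⟪W i, xt⟫ then (1:ℝ) else 0)) +
          (1 / Real.sqrt m) * (a i * ⟪W' i, x⟫ *
            ((if 0 ≤ ⟪W' i, x⟫ then (1:ℝ) else 0) - (if 0 ≤ ⟪W i, x⟫ then (1:ℝ) else 0))) := by
      intro i
      rw [relu_eq, relu_eq, hu' i, show ((1:ℝ)/m) = 1/(Real.sqrt m * Real.sqrt m) by rw [hmm]]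
      rcases ha i with h | h <;> rw [h] <;> ring
    rw [Finset.sum_congr rfl fun i _ => step i, Finset.sum_add_distrib,
      ← Finset.mul_sum, ← Finset.mul_sum]
    unfold empKernel
    ring
  -- sum expressions for L and M
  have hLs : η * G * L x xt = ∑ i, (if a i = 1 then
      (η * G * ((1:ℝ)/m) * ⟪x, xt⟫) * ((if 0 ≤ ⟪W i, xt⟫ then (1:ℝ) else 0) *
        ((if 0 ≤ ⟪W' i, x⟫ then (1:ℝ) else 0) - (if 0 ≤ ⟪W i, x⟫ then (1:ℝ) else 0)))
      else 0) := by
    rw [hL, hA, Finset.sum_filter]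
    simp only [Finset.mul_sum]
    exact Finset.sum_congr rfl fun i _ => by split_ifs <;> ring
  have hMs : η * G * M x xt = ∑ i, (if a i = -1 then
      (η * G * ((1:ℝ)/m) * ⟪x, xt⟫) * ((if 0 ≤ ⟪W i, xt⟫ then (1:ℝ) else 0) *
        ((if 0 ≤ ⟪W' i, x⟫ then (1:ℝ) else 0) - (if 0 ≤ ⟪W i, x⟫ then (1:ℝ) else 0)))
      else 0) := by
    rw [hM, hB, Finset.sum_filter]
    simp only [Finset.mul_sum]
    exact Finset.sum_congr rfl fun i _ => by split_ifs <;> ring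
  have hnn : (0:ℝ) ≤ 1 / Real.sqrt m := by positivity
  -- upper bound on residual
  have hRle : (1 / Real.sqrt m) * (∑ i, a i * ⟪W' i, x⟫ *
        ((if 0 ≤ ⟪W' i, x⟫ then (1:ℝ) else 0) - (if 0 ≤ ⟪W i, x⟫ then (1:ℝ) else 0)))
      ≤ ∑ i, (if a i = 1 then
      (η * G * ((1:ℝ)/m) * ⟪x, xt⟫) * ((if 0 ≤ ⟪W i, xt⟫ then (1:ℝ) else 0) *
        ((if 0 ≤ ⟪W' i, x⟫ then (1:ℝ) else 0) - (if 0 ≤ ⟪W i, x⟫ then (1:ℝ) else 0)))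
      else 0) := by
    rw [Finset.mul_sum]
    apply Finset.sum_le_sum
    intro i _
    have h1 := cross_nonpos ⟪W i, x⟫ ⟪W' i, x⟫
    have h1' := same_nonneg ⟪W i, x⟫ ⟪W' i, x⟫
    have h3 := mul_le_mul_of_nonneg_left h1 hnn
    rw [mul_zero] at h3
    by_cases hc : a i = 1
    · rw [if_pos hc]
      have h4 : 1 / Real.sqrt m * (a i * ⟪W' i, x⟫ *
          ((if 0 ≤ ⟪W' i, x⟫ then (1:ℝ) else 0) - (if 0 ≤ ⟪W i, x⟫ then (1:ℝ) else 0)))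
          = 1 / Real.sqrt m * (⟪W i, x⟫ *
            ((if 0 ≤ ⟪W' i, x⟫ then (1:ℝ) else 0) - (if 0 ≤ ⟪W i, x⟫ then (1:ℝ) else 0)))
          + (η * G * ((1:ℝ)/m) * ⟪x, xt⟫) * ((if 0 ≤ ⟪W i, xt⟫ then (1:ℝ) else 0) *
            ((if 0 ≤ ⟪W' i, x⟫ then (1:ℝ) else 0) - (if 0 ≤ ⟪W i, x⟫ then (1:ℝ) else 0))) := by
        rw [hu' i, hc, show ((1:ℝ)/m) = 1/(Real.sqrt m * Real.sqrt m) by rw [hmm]]; ring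
      linarith [h3, h4]
    · rw [if_neg hc]
      rw [(ha i).resolve_left hc]
      linarith [mul_le_mul_of_nonneg_left h1' hnn]
  -- lower bound on residual
  have hRge : (∑ i, (if a i = -1 then
      (η * G * ((1:ℝ)/m) * ⟪x, xt⟫) * ((if 0 ≤ ⟪W i, xt⟫ then (1:ℝ) else 0) *
        ((if 0 ≤ ⟪W' i, x⟫ then (1:ℝ) else 0) - (if 0 ≤ ⟪W i, x⟫ then (1:ℝ) else 0)))
      else 0))
      ≤ (1 / Real.sqrt m) * (∑ i, a i * ⟪W' i, x⟫ *
        ((if 0 ≤ ⟪W' i, x⟫ then (1:ℝ) else 0) - (if 0 ≤ ⟪W i, x⟫ then (1:ℝ) else 0))) := by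
    rw [Finset.mul_sum]
    apply Finset.sum_le_sum
    intro i _
    have h1 := cross_nonpos ⟪W i, x⟫ ⟪W' i, x⟫
    have h1' := same_nonneg ⟪W i, x⟫ ⟪W' i, x⟫
    have h3 := mul_le_mul_of_nonneg_left h1 hnn
    rw [mul_zero] at h3
    by_cases hc : a i = -1
    · rw [if_pos hc]
      have h4 : 1 / Real.sqrt m * (a i * ⟪W' i, x⟫ *
          ((if 0 ≤ ⟪W' i, x⟫ then (1:ℝ) else 0) - (if 0 ≤ ⟪W i, x⟫ then (1:ℝ) else 0)))
          = -(1 / Real.sqrt m * (⟪W i, x⟫ *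
            ((if 0 ≤ ⟪W' i, x⟫ then (1:ℝ) else 0) - (if 0 ≤ ⟪W i, x⟫ then (1:ℝ) else 0))))
          + (η * G * ((1:ℝ)/m) * ⟪x, xt⟫) * ((if 0 ≤ ⟪W i, xt⟫ then (1:ℝ) else 0) *
            ((if 0 ≤ ⟪W' i, x⟫ then (1:ℝ) else 0) - (if 0 ≤ ⟪W i, x⟫ then (1:ℝ) else 0))) := by
        rw [hu' i, hc, show ((1:ℝ)/m) = 1/(Real.sqrt m * Real.sqrt m) by rw [hmm]]; ring
      linarith [h3, h4]
    · rw [if_neg hc]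
      rw [(ha i).resolve_right hc]
      linarith [mul_le_mul_of_nonneg_left h1' hnn]
  constructor
  · rw [key]; linarith [hRge, hMs]
  · rw [key]; linarith [hRle, hLs]
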